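/- Let M be a graded multiplication R-module and N a proper graded submodule of M. Then N is a graded quasi-semiprime submodule of M if and only if for every graded ideal I of R and every k ∈ ℤ⁺ with IᵏM ⊆ N, one has IM ⊆ N. -/

import Mathlib

open DirectSum

section Defs

variable {G : Type*} [AddGroup G] [DecidableEq G]
variable {R : Type*} [CommRing R] {M : Type*} [AddCommGroup M] [Module R M]

/-- An ideal is graded if it contains all homogeneous components of its elements. -/
def IsGradedIdeal (𝒜 : G → AddSubgroup R) [GradedRing 𝒜] (I : Ideal R) : Prop :=
  ∀ r ∈ I, ∀ g : G, (DirectSum.decompose 𝒜 r g : R) ∈ I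

/-- A submodule is graded if it contains all homogeneous components of its elements. -/
def IsGradedSubmodule (ℳ : G → AddSubgroup M) [DirectSum.Decomposition ℳ]
    (N : Submodule R M) : Prop :=
  ∀ m ∈ N, ∀ g : G, (DirectSum.decompose ℳ m g : M) ∈ N

/-- A graded semiprime ideal: proper, graded, and r^n*s ∈ I implies r*s ∈ I for homogeneous r,s. -/
def IsGradedSemiprimeIdeal (𝒜 : G → AddSubgroup R) [GradedRing 𝒜] (I : Ideal R) : Prop :=
  I ≠ ⊤ ∧ IsGradedIdeal 𝒜 I ∧
    ∀ r s : R, SetLike.IsHomogeneousElem 𝒜 r → SetLike.IsHomogeneousElem 𝒜 s →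
      ∀ n : ℕ, 0 < n → r ^ n * s ∈ I → r * s ∈ I

/-- A graded prime ideal. -/
def IsGradedPrimeIdeal (𝒜 : G → AddSubgroup R) [GradedRing 𝒜] (I : Ideal R) : Prop :=
  I ≠ ⊤ ∧ IsGradedIdeal 𝒜 I ∧
    ∀ r s : R, SetLike.IsHomogeneousElem 𝒜 r → SetLike.IsHomogeneousElem 𝒜 s →
      r * s ∈ I → r ∈ I ∨ s ∈ I

/-- A graded primary ideal. -/
def IsGradedPrimaryIdeal (𝒜 : G → AddSubgroup R) [GradedRing 𝒜] (I : Ideal R) : Prop :=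
  I ≠ ⊤ ∧ IsGradedIdeal 𝒜 I ∧
    ∀ r s : R, SetLike.IsHomogeneousElem 𝒜 r → SetLike.IsHomogeneousElem 𝒜 s →
      r * s ∈ I → r ∈ I ∨ ∃ n : ℕ, 0 < n ∧ s ^ n ∈ I

/-- A graded maximal ideal: proper graded ideal maximal among proper graded ideals. -/
def IsGradedMaximalIdeal (𝒜 : G → AddSubgroup R) [GradedRing 𝒜] (I : Ideal R) : Prop :=
  I ≠ ⊤ ∧ IsGradedIdeal 𝒜 I ∧
    ∀ J : Ideal R, IsGradedIdeal 𝒜 J → I ≤ J → J ≠ ⊤ → J = I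

/-- A graded semiprime submodule. -/
def IsGradedSemiprimeSubmodule (𝒜 : G → AddSubgroup R) (ℳ : G → AddSubgroup M)
    [DirectSum.Decomposition ℳ] (N : Submodule R M) : Prop :=
  N ≠ ⊤ ∧ IsGradedSubmodule ℳ N ∧
    ∀ (r : R) (m : M), SetLike.IsHomogeneousElem 𝒜 r → SetLike.IsHomogeneousElem ℳ m →
      ∀ n : ℕ, 0 < n → r ^ n • m ∈ N → r • m ∈ N

/-- A graded quasi-semiprime submodule: proper graded submodule whose colon ideal
`(N :_R M)` is a graded semiprime ideal. -/
def IsGradedQuasiSemiprimeSubmodule (𝒜 : G → AddSubgroup R) [GradedRing 𝒜]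
    (ℳ : G → AddSubgroup M) [DirectSum.Decomposition ℳ] (N : Submodule R M) : Prop :=
  N ≠ ⊤ ∧ IsGradedSubmodule ℳ N ∧ IsGradedSemiprimeIdeal 𝒜 (N.colon ⊤)

/-- A graded multiplication module: every graded submodule N equals (N :_R M)M. -/
def IsGradedMultiplicationModule (𝒜 : G → AddSubgroup R) [GradedRing 𝒜]
    (ℳ : G → AddSubgroup M) [DirectSum.Decomposition ℳ] : Prop :=
  ∀ N : Submodule R M, IsGradedSubmodule ℳ N → N = (N.colon ⊤) • (⊤ : Submodule R M)

end Defs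


section Aux

variable {G : Type*} [AddGroup G] [DecidableEq G]
variable {R : Type*} [CommRing R] {M : Type*} [AddCommGroup M] [Module R M]
variable (𝒜 : G → AddSubgroup R) [GradedRing 𝒜]
variable (ℳ : G → AddSubgroup M) [DirectSum.Decomposition ℳ] [SetLike.GradedSMul 𝒜 ℳ]

lemma decompose_smul_homog (r : R) {h : G} (m : M) (hm : m ∈ ℳ h) (g : G) :
    (DirectSum.decompose ℳ (r • m) (g + h) : M) = (DirectSum.decompose 𝒜 r g : R) • m := by
  induction r using DirectSum.Decomposition.inductionOn 𝒜 with
  | zero => simp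
  | @homogeneous i a =>
    have hmem : (a : R) • m ∈ ℳ (i + h) := SetLike.GradedSMul.smul_mem a.2 hm
    by_cases hig : i = g
    · subst hig
      rw [DirectSum.decompose_of_mem_same ℳ hmem, DirectSum.decompose_coe,
        DirectSum.of_eq_same]
    · rw [DirectSum.decompose_of_mem_ne ℳ hmem
        (fun hc => hig (add_right_cancel hc)),
        DirectSum.decompose_coe, DirectSum.of_eq_of_ne _ _ _ (Ne.symm hig)]
      simp
  | add x y hx hy =>
    rw [add_smul, DirectSum.decompose_add, DirectSum.add_apply, DirectSum.decompose_add,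
      DirectSum.add_apply, AddSubgroup.coe_add, AddSubgroup.coe_add, hx, hy, add_smul]

lemma decompose_mul_homog (c x : R) {d : G} (hx : x ∈ 𝒜 d) (g : G) :
    (DirectSum.decompose 𝒜 (c * x) (g + d) : R) = (DirectSum.decompose 𝒜 c g : R) * x := by
  induction c using DirectSum.Decomposition.inductionOn 𝒜 with
  | zero => simp
  | @homogeneous i a =>
    have hmem : (a : R) * x ∈ 𝒜 (i + d) := SetLike.mul_mem_graded a.2 hx
    by_cases hig : i = g
    · subst hig
      rw [DirectSum.decompose_of_mem_same 𝒜 hmem, DirectSum.decompose_coe,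
        DirectSum.of_eq_same]
    · rw [DirectSum.decompose_of_mem_ne 𝒜 hmem
        (fun hc => hig (add_right_cancel hc)),
        DirectSum.decompose_coe, DirectSum.of_eq_of_ne _ _ _ (Ne.symm hig)]
      simp
  | add p q hp hq =>
    rw [add_mul, DirectSum.decompose_add, DirectSum.add_apply, DirectSum.decompose_add,
      DirectSum.add_apply, AddSubgroup.coe_add, AddSubgroup.coe_add, hp, hq, add_mul]

lemma span_singleton_graded {x : R} (hx : SetLike.IsHomogeneousElem 𝒜 x) :
    IsGradedIdeal 𝒜 (Ideal.span {x}) := by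
  obtain ⟨d, hxd⟩ := hx
  intro r hr g
  obtain ⟨c, rfl⟩ := Ideal.mem_span_singleton'.mp hr
  have h1 : g = (g - d) + d := (sub_add_cancel g d).symm
  rw [h1, decompose_mul_homog 𝒜 c x hxd (g - d)]
  exact Ideal.mem_span_singleton'.mpr ⟨_, rfl⟩

lemma colon_graded {N : Submodule R M} (hNg : IsGradedSubmodule ℳ N) :
    IsGradedIdeal 𝒜 (N.colon ⊤) := by
  classical
  intro r hr g
  rw [Submodule.mem_colon] at hr ⊢
  intro m _
  have hm : m = ∑ h ∈ (DirectSum.decompose ℳ m).support, (DirectSum.decompose ℳ m h : M) :=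
    (DirectSum.sum_support_decompose ℳ m).symm
  rw [hm, Finset.smul_sum]
  refine Submodule.sum_mem _ fun h _ => ?_
  rw [← decompose_smul_homog 𝒜 ℳ r _ (SetLike.coe_mem _) g]
  exact hNg _ (hr _ trivial) _

end Aux

variable {G : Type*} [AddGroup G] [DecidableEq G]
variable {R : Type*} [CommRing R] {M : Type*} [AddCommGroup M] [Module R M]
variable (𝒜 : G → AddSubgroup R) [GradedRing 𝒜]
variable (ℳ : G → AddSubgroup M) [DirectSum.Decomposition ℳ] [SetLike.GradedSMul 𝒜 ℳ]

theorem stmt4 (hM : IsGradedMultiplicationModule 𝒜 ℳ) (N : Submodule R M) (hNt : N ≠ ⊤)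
    (hNg : IsGradedSubmodule ℳ N) :
    IsGradedQuasiSemiprimeSubmodule 𝒜 ℳ N ↔
      ∀ I : Ideal R, IsGradedIdeal 𝒜 I → ∀ k : ℕ, 0 < k →
        I ^ k • (⊤ : Submodule R M) ≤ N → I • (⊤ : Submodule R M) ≤ N := by
  classical
  constructor
  · rintro ⟨-, -, -, -, hsp⟩ I hI k hk hIk
    have hIcol : I ≤ N.colon ⊤ := by
      intro r hr
      have hr' : r = ∑ g ∈ (DirectSum.decompose 𝒜 r).support, (DirectSum.decompose 𝒜 r g : R) :=
        (DirectSum.sum_support_decompose 𝒜 r).symm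
      rw [hr']
      refine Submodule.sum_mem _ fun g _ => ?_
      have hpow : (DirectSum.decompose 𝒜 r g : R) ^ k ∈ (N.colon ⊤ : Ideal R) := by
        have hmem : (DirectSum.decompose 𝒜 r g : R) ^ k ∈ I ^ k :=
          Ideal.pow_mem_pow (hI r hr g) k
        rw [Submodule.mem_colon]
        intro m _
        exact hIk (Submodule.smul_mem_smul hmem trivial)
      have := hsp (DirectSum.decompose 𝒜 r g : R) 1 ⟨g, SetLike.coe_mem _⟩
        (SetLike.isHomogeneousElem_one 𝒜) k hk (by simpa using hpow)
      simpa using this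
    exact Submodule.smul_le.mpr fun r hr m _ => Submodule.mem_colon.mp (hIcol hr) m trivial
  · intro hcond
    refine ⟨hNt, hNg, ?_, colon_graded 𝒜 ℳ hNg, ?_⟩
    · intro hc
      apply hNt
      rw [eq_top_iff]
      intro m _
      simpa using Submodule.mem_colon.mp (hc ▸ Submodule.mem_top : (1:R) ∈ N.colon ⊤) m trivial
    · intro r s hrh hsh n hn hrs
      obtain ⟨m, rfl⟩ := Nat.exists_eq_succ_of_ne_zero hn.ne'
      have hpow : (r * s) ^ (m + 1) ∈ (N.colon ⊤ : Ideal R) := by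
        have heq : (r * s) ^ (m + 1) = (r ^ (m + 1) * s) * s ^ m := by
          rw [mul_pow, pow_succ s m]; ring
        rw [heq]
        exact Ideal.mul_mem_right _ _ hrs
      have h1 : (Ideal.span {r * s}) ^ (m + 1) • (⊤ : Submodule R M) ≤ N := by
        rw [Ideal.span_singleton_pow]
        refine Submodule.smul_le.mpr fun c hc x _ => ?_
        obtain ⟨a, rfl⟩ := Ideal.mem_span_singleton'.mp hc
        rw [mul_smul]
        exact Submodule.smul_mem N a (Submodule.mem_colon.mp hpow x trivial)
      have h2 : Ideal.span {r * s} • (⊤ : Submodule R M) ≤ N :=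
        hcond _ (span_singleton_graded 𝒜 (SetLike.IsHomogeneousElem.mul hrh hsh)) (m + 1) (Nat.succ_pos m) h1
      rw [Submodule.mem_colon]
      intro x _
      exact h2 (Submodule.smul_mem_smul (Ideal.mem_span_singleton_self _) trivial)
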